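/- Let Z be a centered Gaussian random variable on a real separable Hilbert space K with covariance operator S. Then E(||Z||^4) = (E(||Z||^2))^2 + 2 ||S||_HS^2, where ||S||_HS denotes the Hilbert–Schmidt norm of S. -/

import Mathlib

open MeasureTheory ProbabilityTheory
open scoped RealInnerProductSpace NNReal ENNReal

section AuxGaussianMoment

open Real Set

open MeasureTheory Real Set

lemma quartic_gauss_Ioi {b : ℝ} (hb : 0 < b) :
    ∫ x in Ioi (0:ℝ), x ^ 4 * Real.exp (-b * x ^ 2)
      = (1 / 2) * ((1 / b) ^ ((5:ℝ)/2) * Real.Gamma (5/2)) := by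
  calc ∫ x in Ioi (0:ℝ), x ^ 4 * Real.exp (-b * x ^ 2)
      = ∫ x in Ioi (0:ℝ), ((2:ℝ) * x ^ ((2:ℝ) - 1)) •
          ((1/2) * ((x ^ (2:ℝ)) ^ ((3:ℝ)/2) * Real.exp (-(b * x ^ (2:ℝ))))) := by
        refine setIntegral_congr_fun measurableSet_Ioi (fun x hx => ?_)
        have hx0 : (0:ℝ) < x := hx
        have h2 : x ^ (2:ℝ) = x ^ (2:ℕ) := Real.rpow_natCast x 2
        have h32 : (x ^ (2:ℝ)) ^ ((3:ℝ)/2) = x ^ (3:ℕ) := by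
          rw [← Real.rpow_mul hx0.le, ← Real.rpow_natCast x 3]; norm_num
        have h1 : x ^ ((2:ℝ) - 1) = x := by norm_num
        rw [h32, h1, h2, smul_eq_mul]
        ring
    _ = ∫ t in Ioi (0:ℝ), (1/2) * (t ^ ((3:ℝ)/2) * Real.exp (-(b * t))) :=
        MeasureTheory.integral_comp_rpow_Ioi_of_pos
          (g := fun t : ℝ => (1/2) * (t ^ ((3:ℝ)/2) * Real.exp (-(b * t)))) two_pos
    _ = (1/2) * ∫ t in Ioi (0:ℝ), t ^ ((5:ℝ)/2 - 1) * Real.exp (-(b * t)) := by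
        rw [MeasureTheory.integral_const_mul]; norm_num
    _ = (1/2) * ((1 / b) ^ ((5:ℝ)/2) * Real.Gamma (5/2)) := by
        rw [integral_rpow_mul_exp_neg_mul_Ioi (by norm_num : (0:ℝ) < 5/2) hb]

open scoped NNReal ENNReal

lemma quartic_gauss_line {b : ℝ} (hb : 0 < b) :
    ∫ x : ℝ, x ^ 4 * Real.exp (-b * x ^ 2)
      = (1 / b) ^ ((5:ℝ)/2) * Real.Gamma (5/2) := by
  have h : ∀ x : ℝ, (fun y : ℝ => y ^ 4 * Real.exp (-b * y ^ 2)) |x|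
      = x ^ 4 * Real.exp (-b * x ^ 2) := by
    intro x
    have h4 : |x| ^ 4 = x ^ 4 := by
      rw [← abs_pow, abs_of_nonneg (by positivity)]
    simp only [sq_abs, h4]
  calc ∫ x : ℝ, x ^ 4 * Real.exp (-b * x ^ 2)
      = ∫ x : ℝ, (fun y : ℝ => y ^ 4 * Real.exp (-b * y ^ 2)) |x| := by
        exact (integral_congr_ae (Filter.Eventually.of_forall h)).symm
    _ = 2 * ∫ x in Ioi (0:ℝ), x ^ 4 * Real.exp (-b * x ^ 2) :=
        integral_comp_abs (f := fun y : ℝ => y ^ 4 * Real.exp (-b * y ^ 2))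
    _ = (1 / b) ^ ((5:ℝ)/2) * Real.Gamma (5/2) := by rw [quartic_gauss_Ioi hb]; ring

lemma gaussianReal_fourth_moment (v : ℝ≥0) :
    ∫ x : ℝ, x ^ 4 ∂(ProbabilityTheory.gaussianReal 0 v) = 3 * (v:ℝ) ^ 2 := by
  by_cases hv : v = 0
  · simp [hv]
  · have hv0 : (0:ℝ) < v := lt_of_le_of_ne v.coe_nonneg (by exact_mod_cast (Ne.symm hv))
    rw [ProbabilityTheory.gaussianReal_of_var_ne_zero _ hv]
    have hpdf : (ProbabilityTheory.gaussianPDF 0 v)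
        = fun x => ((Real.toNNReal (ProbabilityTheory.gaussianPDFReal 0 v x) : ℝ≥0) : ℝ≥0∞) :=
      rfl
    rw [hpdf, integral_withDensity_eq_integral_smul
      ((ProbabilityTheory.measurable_gaussianPDFReal 0 v).real_toNNReal)]
    have hb : (0:ℝ) < (2 * (v:ℝ))⁻¹ := by positivity
    have heq : ∀ x : ℝ, (Real.toNNReal (ProbabilityTheory.gaussianPDFReal 0 v x) : ℝ≥0) • (x ^ 4)
        = (√(2 * Real.pi * v))⁻¹ * (x ^ 4 * Real.exp (-(2 * (v:ℝ))⁻¹ * x ^ 2)) := by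
      intro x
      have hnn := ProbabilityTheory.gaussianPDFReal_nonneg 0 v x
      rw [NNReal.smul_def, smul_eq_mul, Real.coe_toNNReal _ hnn]
      unfold ProbabilityTheory.gaussianPDFReal
      have harg : -(x - 0)^2 / (2*(v:ℝ)) = -(2*(v:ℝ))⁻¹ * x^2 := by
        rw [sub_zero]; field_simp
      rw [harg]; ring
    rw [integral_congr_ae (Filter.Eventually.of_forall heq), integral_const_mul,
      quartic_gauss_line hb]
    rw [one_div, inv_inv]
    have hG : Real.Gamma (5/2) = 3 / 4 * √Real.pi := by
      rw [show (5:ℝ)/2 = 3/2 + 1 by norm_num, Real.Gamma_add_one (by norm_num),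
        show (3:ℝ)/2 = 1/2 + 1 by norm_num, Real.Gamma_add_one (by norm_num),
        Real.Gamma_one_half_eq]
      ring
    have h1 : (2*(v:ℝ)) ^ ((5:ℝ)/2) = (2*(v:ℝ))^(2:ℕ) * √(2*(v:ℝ)) := by
      rw [Real.sqrt_eq_rpow, ← Real.rpow_natCast (2*(v:ℝ)) 2,
        ← Real.rpow_add (by positivity)]
      norm_num
    have hsplit : √(2 * Real.pi * v) = √Real.pi * √(2*(v:ℝ)) := by
      rw [show 2 * Real.pi * (v:ℝ) = Real.pi * (2*(v:ℝ)) by ring,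
        Real.sqrt_mul Real.pi_nonneg]
    rw [h1, hG, hsplit]
    have hπ : √Real.pi ≠ 0 := ne_of_gt (Real.sqrt_pos.mpr Real.pi_pos)
    have h2v : √(2*(v:ℝ)) ≠ 0 := ne_of_gt (Real.sqrt_pos.mpr (by positivity))
    field_simp
    ring

end AuxGaussianMoment

/-- If `Z` is a centered Gaussian random variable on a separable Hilbert
space `K` with covariance operator `S`, then `E‖Z‖⁴ = (E‖Z‖²)² + 2‖S‖_HS²`. -/
theorem gaussian_fourth_moment
    {Ω : Type*} [MeasurableSpace Ω] (μ : Measure Ω) [IsProbabilityMeasure μ]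
    {K : Type*} [NormedAddCommGroup K] [InnerProductSpace ℝ K] [CompleteSpace K]
    [TopologicalSpace.SeparableSpace K]
    {ι : Type*} (b : HilbertBasis ι ℝ K)
    (Z : Ω → K) (S : K →L[ℝ] K)
    (hmeas : AEStronglyMeasurable Z μ)
    (hgauss : ∀ u : K,
      Measure.map (fun ω => ⟪Z ω, u⟫) μ = gaussianReal 0 (Real.toNNReal ⟪S u, u⟫))
    (hcov : ∀ u v : K, ∫ ω, ⟪Z ω, u⟫ * ⟪Z ω, v⟫ ∂μ = ⟪S u, v⟫)
    (hL4 : MemLp Z 4 μ)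
    (hHS : Summable fun i => ‖S (b i)‖ ^ 2) :
    ∫ ω, ‖Z ω‖ ^ 4 ∂μ = (∫ ω, ‖Z ω‖ ^ 2 ∂μ) ^ 2 + 2 * ∑' i, ‖S (b i)‖ ^ 2 := by
  -- countability of the index type
  have hcount : Countable ι := by
    refine Pairwise.countable_of_isOpen_disjoint
      (s := fun i => Metric.ball (b i) (1/2)) ?_ (fun i => Metric.isOpen_ball)
      (fun i => ⟨b i, Metric.mem_ball_self (by norm_num)⟩)
    intro i j hij
    simp only [Function.onFun]
    rw [Set.disjoint_left]
    intro x hxi hxj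
    have h1 : ‖b i‖ = 1 := b.orthonormal.1 i
    have h2 : ‖b j‖ = 1 := b.orthonormal.1 j
    have h0 : ⟪b i, b j⟫ = 0 := b.orthonormal.2 hij
    have hd2 : ‖b i - b j‖ ^ 2 = 2 := by
      rw [norm_sub_sq_real, h1, h2, h0]; norm_num
    have hd : (1:ℝ) ≤ ‖b i - b j‖ := by nlinarith [norm_nonneg (b i - b j)]
    have : dist (b i) (b j) < 1 := by
      calc dist (b i) (b j) ≤ dist (b i) x + dist x (b j) := dist_triangle _ _ _
        _ < 1/2 + 1/2 := by
            rw [Metric.mem_ball] at hxi hxj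
            exact add_lt_add (by rwa [dist_comm]) hxj
        _ = 1 := by norm_num
    rw [dist_eq_norm] at this; linarith
  -- notation
  set X : ι → Ω → ℝ := fun i ω => ⟪Z ω, b i⟫ with hX
  have hXmeasu : ∀ u : K, AEStronglyMeasurable (fun ω => ⟪Z ω, u⟫) μ := fun u =>
    hmeas.inner aestronglyMeasurable_const
  have hXmeas : ∀ i, AEStronglyMeasurable (X i) μ := fun i => hXmeasu (b i)
  -- Parseval
  have hP : ∀ ω, HasSum (fun i => X i ω ^ 2) (‖Z ω‖ ^ 2) := by
    intro ω
    have := b.hasSum_inner_mul_inner (Z ω) (Z ω)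
    rw [real_inner_self_eq_norm_sq] at this
    convert this using 1
    · rfl
    funext i
    simp only [hX]
    rw [real_inner_comm (b i) (Z ω)]; ring
  -- integrability
  have hI4 : Integrable (fun ω => ‖Z ω‖ ^ 4) μ := by
    have := hL4.integrable_norm_rpow (by norm_num) (by norm_num)
    refine this.congr (Filter.Eventually.of_forall fun ω => ?_)
    simp only []
    rw [show ((4:ℝ≥0∞).toReal) = ((4:ℕ):ℝ) by norm_num, Real.rpow_natCast]
  -- nonnegativity of the covariance quadratic form
  have hSnn : ∀ u : K, 0 ≤ ⟪S u, u⟫ := by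
    intro u
    rw [← hcov u u]
    exact integral_nonneg fun ω => mul_self_nonneg _
  -- fourth moment of one-dimensional projections
  have hmom4 : ∀ u : K, ∫ ω, ⟪Z ω, u⟫ ^ 4 ∂μ = 3 * ⟪S u, u⟫ ^ 2 := by
    intro u
    have hmu : AEMeasurable (fun ω => ⟪Z ω, u⟫) μ := (hXmeasu u).aemeasurable
    have h1 : ∫ ω, ⟪Z ω, u⟫ ^ 4 ∂μ
        = ∫ x : ℝ, x ^ 4 ∂(Measure.map (fun ω => ⟪Z ω, u⟫) μ) := by
      rw [integral_map hmu (by fun_prop)]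
    rw [h1, hgauss u, gaussianReal_fourth_moment,
      Real.coe_toNNReal _ (hSnn u)]
  -- integrability of fourth powers of projections
  have hIu : ∀ u : K, Integrable (fun ω => ⟪Z ω, u⟫ ^ 4) μ := by
    intro u
    refine (hI4.const_mul (‖u‖ ^ 4)).mono' ((hXmeasu u).pow 4)
      (Filter.Eventually.of_forall fun ω => ?_)
    have h := abs_real_inner_le_norm (Z ω) u
    calc ‖⟪Z ω, u⟫ ^ 4‖ = |⟪Z ω, u⟫| ^ 4 := by rw [Real.norm_eq_abs, abs_pow]
      _ ≤ (‖Z ω‖ * ‖u‖) ^ 4 := by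
          exact pow_le_pow_left₀ (abs_nonneg _) h 4
      _ = ‖u‖ ^ 4 * ‖Z ω‖ ^ 4 := by ring
  -- pointwise bound
  have hXle : ∀ i ω, |X i ω| ≤ ‖Z ω‖ := by
    intro i ω
    have h := abs_real_inner_le_norm (Z ω) (b i)
    rwa [b.orthonormal.1 i, mul_one] at h
  -- integrability of squares-products
  have hIxy : ∀ i j, Integrable (fun ω => X i ω ^ 2 * X j ω ^ 2) μ := by
    intro i j
    refine hI4.mono' (((hXmeas i).pow 2).mul ((hXmeas j).pow 2))
      (Filter.Eventually.of_forall fun ω => ?_)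
    have hi := hXle i ω; have hj := hXle j ω
    have hz : (0:ℝ) ≤ ‖Z ω‖ := norm_nonneg _
    calc ‖X i ω ^ 2 * X j ω ^ 2‖ = |X i ω| ^ 2 * |X j ω| ^ 2 := by
          rw [Real.norm_eq_abs, abs_mul, abs_pow, abs_pow]
      _ ≤ ‖Z ω‖ ^ 2 * ‖Z ω‖ ^ 2 := by
          have := abs_nonneg (X i ω); have := abs_nonneg (X j ω)
          gcongr
      _ = ‖Z ω‖ ^ 4 := by ring
  -- covariance abbreviations and symmetry
  have hsym : ∀ u v : K, ⟪S u, v⟫ = ⟪S v, u⟫ := by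
    intro u v
    rw [← hcov u v, ← hcov v u]
    exact integral_congr_ae (Filter.Eventually.of_forall fun ω => mul_comm _ _)
  -- variance of projections
  have hvar : ∀ i, ∫ ω, X i ω ^ 2 ∂μ = ⟪S (b i), b i⟫ := by
    intro i
    rw [← hcov (b i) (b i)]
    exact integral_congr_ae (Filter.Eventually.of_forall fun ω => by simp only [hX]; ring)
  -- the cross-moment identity
  have hXX : ∀ i j, ∫ ω, X i ω ^ 2 * X j ω ^ 2 ∂μ
      = ⟪S (b i), b i⟫ * ⟪S (b j), b j⟫ + 2 * ⟪S (b i), b j⟫ ^ 2 := by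
    intro i j
    have hplus : ∀ ω, ⟪Z ω, b i + b j⟫ = X i ω + X j ω := by
      intro ω; simp [hX, inner_add_right]
    have hminus : ∀ ω, ⟪Z ω, b i - b j⟫ = X i ω - X j ω := by
      intro ω; simp [hX, inner_sub_right]
    have hIi : Integrable (fun ω => X i ω ^ 4) μ := hIu (b i)
    have hIj : Integrable (fun ω => X j ω ^ 4) μ := hIu (b j)
    have key : (∫ ω, ⟪Z ω, b i + b j⟫ ^ 4 ∂μ) + (∫ ω, ⟪Z ω, b i - b j⟫ ^ 4 ∂μ)
        = 2 * (∫ ω, X i ω ^ 4 ∂μ) + 12 * (∫ ω, X i ω ^ 2 * X j ω ^ 2 ∂μ)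
          + 2 * (∫ ω, X j ω ^ 4 ∂μ) := by
      rw [← integral_add (hIu (b i + b j)) (hIu (b i - b j))]
      rw [show (2:ℝ) * (∫ ω, X i ω ^ 4 ∂μ) = ∫ ω, 2 * X i ω ^ 4 ∂μ by
        rw [integral_const_mul]]
      rw [show (12:ℝ) * (∫ ω, X i ω ^ 2 * X j ω ^ 2 ∂μ)
          = ∫ ω, 12 * (X i ω ^ 2 * X j ω ^ 2) ∂μ by rw [integral_const_mul]]
      rw [show (2:ℝ) * (∫ ω, X j ω ^ 4 ∂μ) = ∫ ω, 2 * X j ω ^ 4 ∂μ by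
        rw [integral_const_mul]]
      rw [← integral_add ((hIi.const_mul 2)) ((hIxy i j).const_mul 12),
        ← integral_add
          (show Integrable (fun ω => 2 * X i ω ^ 4 + 12 * (X i ω ^ 2 * X j ω ^ 2)) μ from
            (hIi.const_mul 2).add ((hIxy i j).const_mul 12))
          ((hIj.const_mul 2))]
      refine integral_congr_ae (Filter.Eventually.of_forall fun ω => ?_)
      simp only [hX, inner_add_right, inner_sub_right]
      ring
    have e1 : ⟪S (b i + b j), b i + b j⟫
        = ⟪S (b i), b i⟫ + 2 * ⟪S (b i), b j⟫ + ⟪S (b j), b j⟫ := by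
      simp only [map_add, inner_add_left, inner_add_right]
      rw [hsym (b j) (b i)]; ring
    have e2 : ⟪S (b i - b j), b i - b j⟫
        = ⟪S (b i), b i⟫ - 2 * ⟪S (b i), b j⟫ + ⟪S (b j), b j⟫ := by
      simp only [map_sub, inner_sub_left, inner_sub_right]
      rw [hsym (b j) (b i)]; ring
    rw [hmom4 (b i + b j), hmom4 (b i - b j), e1, e2] at key
    have hi4 : ∫ ω, X i ω ^ 4 ∂μ = 3 * ⟪S (b i), b i⟫ ^ 2 := hmom4 (b i)
    have hj4 : ∫ ω, X j ω ^ 4 ∂μ = 3 * ⟪S (b j), b j⟫ ^ 2 := hmom4 (b j)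
    rw [hi4, hj4] at key
    linear_combination -key / 12
  -- measurability and nonnegativity utilities
  have hQmeas : ∀ i, AEStronglyMeasurable (fun ω => X i ω ^ 2 * ‖Z ω‖ ^ 2) μ := fun i =>
    ((hXmeas i).pow 2).mul (hmeas.norm.pow 2)
  have hQijmeas : ∀ i j, AEStronglyMeasurable (fun ω => X i ω ^ 2 * X j ω ^ 2) μ := fun i j =>
    ((hXmeas i).pow 2).mul ((hXmeas j).pow 2)
  -- ENNReal computations
  have hfin4 : ∫⁻ ω, ENNReal.ofReal (‖Z ω‖ ^ 4) ∂μ ≠ ⊤ := by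
    have h : ∫⁻ ω, (‖‖Z ω‖ ^ 4‖₊ : ℝ≥0∞) ∂μ < ⊤ := hI4.2
    have heq : ∀ ω, (‖‖Z ω‖ ^ 4‖₊ : ℝ≥0∞) = ENNReal.ofReal (‖Z ω‖ ^ 4) := fun ω =>
      Real.enorm_eq_ofReal (by positivity)
    rw [← lintegral_congr fun ω => heq ω]
    exact h.ne
  have hkey1 : ∑' i, ∫⁻ ω, ‖X i ω ^ 2 * ‖Z ω‖ ^ 2‖ₑ ∂μ
      = ∫⁻ ω, ENNReal.ofReal (‖Z ω‖ ^ 4) ∂μ := by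
    have h1 : ∀ i, ∫⁻ ω, ‖X i ω ^ 2 * ‖Z ω‖ ^ 2‖ₑ ∂μ
        = ∫⁻ ω, ENNReal.ofReal (X i ω ^ 2 * ‖Z ω‖ ^ 2) ∂μ := fun i =>
      lintegral_congr fun ω => Real.enorm_eq_ofReal (by positivity)
    rw [tsum_congr h1, ← lintegral_tsum (fun i => ((hQmeas i).aemeasurable).ennreal_ofReal)]
    refine lintegral_congr fun ω => ?_
    have hs : HasSum (fun i => X i ω ^ 2 * ‖Z ω‖ ^ 2) (‖Z ω‖ ^ 2 * ‖Z ω‖ ^ 2) :=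
      (hP ω).mul_right _
    rw [← ENNReal.ofReal_tsum_of_nonneg (fun i => by positivity) hs.summable, hs.tsum_eq]
    congr 1; ring
  -- first interchange
  have hstep1 : ∫ ω, ‖Z ω‖ ^ 4 ∂μ = ∑' i, ∫ ω, X i ω ^ 2 * ‖Z ω‖ ^ 2 ∂μ := by
    have hpt : ∀ ω, ‖Z ω‖ ^ 4 = ∑' i, X i ω ^ 2 * ‖Z ω‖ ^ 2 := by
      intro ω
      have hs : HasSum (fun i => X i ω ^ 2 * ‖Z ω‖ ^ 2) (‖Z ω‖ ^ 2 * ‖Z ω‖ ^ 2) :=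
        (hP ω).mul_right _
      rw [hs.tsum_eq]; ring
    rw [integral_congr_ae (Filter.Eventually.of_forall hpt)]
    exact integral_tsum hQmeas (by rw [hkey1]; exact hfin4)
  -- second interchange
  have hstep2 : ∀ i, ∫ ω, X i ω ^ 2 * ‖Z ω‖ ^ 2 ∂μ
      = ∑' j, ∫ ω, X i ω ^ 2 * X j ω ^ 2 ∂μ := by
    intro i
    have hpt : ∀ ω, X i ω ^ 2 * ‖Z ω‖ ^ 2 = ∑' j, X i ω ^ 2 * X j ω ^ 2 := by
      intro ω
      have hs : HasSum (fun j => X i ω ^ 2 * X j ω ^ 2) (X i ω ^ 2 * ‖Z ω‖ ^ 2) :=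
        (hP ω).mul_left _
      rw [hs.tsum_eq]
    have hkey2 : ∑' j, ∫⁻ ω, ‖X i ω ^ 2 * X j ω ^ 2‖ₑ ∂μ
        = ∫⁻ ω, ENNReal.ofReal (X i ω ^ 2 * ‖Z ω‖ ^ 2) ∂μ := by
      have h1 : ∀ j, ∫⁻ ω, ‖X i ω ^ 2 * X j ω ^ 2‖ₑ ∂μ
          = ∫⁻ ω, ENNReal.ofReal (X i ω ^ 2 * X j ω ^ 2) ∂μ := fun j =>
        lintegral_congr fun ω => Real.enorm_eq_ofReal (by positivity)
      rw [tsum_congr h1, ← lintegral_tsum (fun j => ((hQijmeas i j).aemeasurable).ennreal_ofReal)]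
      refine lintegral_congr fun ω => ?_
      have hs : HasSum (fun j => X i ω ^ 2 * X j ω ^ 2) (X i ω ^ 2 * ‖Z ω‖ ^ 2) :=
        (hP ω).mul_left _
      rw [← ENNReal.ofReal_tsum_of_nonneg (fun j => by positivity) hs.summable, hs.tsum_eq]
    have hle : ∫⁻ ω, ENNReal.ofReal (X i ω ^ 2 * ‖Z ω‖ ^ 2) ∂μ
        ≤ ∫⁻ ω, ENNReal.ofReal (‖Z ω‖ ^ 4) ∂μ := by
      refine lintegral_mono fun ω => ENNReal.ofReal_le_ofReal ?_
      have h := hXle i ω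
      have h2 : X i ω ^ 2 ≤ ‖Z ω‖ ^ 2 := by
        rw [← sq_abs]
        exact pow_le_pow_left₀ (abs_nonneg _) h 2
      calc X i ω ^ 2 * ‖Z ω‖ ^ 2 ≤ ‖Z ω‖ ^ 2 * ‖Z ω‖ ^ 2 := by
            have := sq_nonneg (‖Z ω‖); gcongr
        _ = ‖Z ω‖ ^ 4 := by ring
    rw [integral_congr_ae (Filter.Eventually.of_forall hpt)]
    exact integral_tsum (fun j => hQijmeas i j)
      (by rw [hkey2]; exact (lt_of_le_of_lt hle hfin4.lt_top).ne)
  -- integrability of squares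
  have hI2 : Integrable (fun ω => ‖Z ω‖ ^ 2) μ := by
    refine ((integrable_const (1:ℝ)).add hI4).mono' (hmeas.norm.pow 2)
      (Filter.Eventually.of_forall fun ω => ?_)
    have h : (0:ℝ) ≤ ‖Z ω‖ := norm_nonneg _
    rw [Real.norm_eq_abs, abs_of_nonneg (by positivity)]
    simp only [Pi.add_apply]
    nlinarith [sq_nonneg (‖Z ω‖ ^ 2 - 1)]
  have hIX2 : ∀ i, Integrable (fun ω => X i ω ^ 2) μ := by
    intro i
    refine hI2.mono' ((hXmeas i).pow 2) (Filter.Eventually.of_forall fun ω => ?_)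
    rw [Real.norm_eq_abs, abs_of_nonneg (sq_nonneg _), ← sq_abs]
    exact pow_le_pow_left₀ (abs_nonneg _) (hXle i ω) 2
  -- summability of variances
  have hvlint : ∀ i, ∫⁻ ω, ENNReal.ofReal (X i ω ^ 2) ∂μ
      = ENNReal.ofReal ⟪S (b i), b i⟫ := by
    intro i
    rw [← ofReal_integral_eq_lintegral_ofReal (hIX2 i)
      (Filter.Eventually.of_forall fun ω => sq_nonneg _), hvar i]
  have hfin2 : ∫⁻ ω, ENNReal.ofReal (‖Z ω‖ ^ 2) ∂μ ≠ ⊤ := by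
    have h : ∫⁻ ω, (‖‖Z ω‖ ^ 2‖₊ : ℝ≥0∞) ∂μ < ⊤ := hI2.2
    have heq : ∀ ω, (‖‖Z ω‖ ^ 2‖₊ : ℝ≥0∞) = ENNReal.ofReal (‖Z ω‖ ^ 2) := fun ω =>
      Real.enorm_eq_ofReal (by positivity)
    rw [← lintegral_congr fun ω => heq ω]
    exact h.ne
  have hsumlint : ∑' i, ∫⁻ ω, ENNReal.ofReal (X i ω ^ 2) ∂μ
      = ∫⁻ ω, ENNReal.ofReal (‖Z ω‖ ^ 2) ∂μ := by
    rw [← lintegral_tsum (fun i =>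
      ((show AEStronglyMeasurable (fun ω => X i ω ^ 2) μ from
        (hXmeas i).pow 2).aemeasurable).ennreal_ofReal)]
    refine lintegral_congr fun ω => ?_
    rw [← ENNReal.ofReal_tsum_of_nonneg (fun i => sq_nonneg _) (hP ω).summable,
      (hP ω).tsum_eq]
  have hσsum : Summable (fun i => ⟪S (b i), b i⟫) := by
    have hne : ∑' i, ENNReal.ofReal ⟪S (b i), b i⟫ ≠ ⊤ := by
      rw [tsum_congr fun i => (hvlint i).symm, hsumlint]
      exact hfin2
    have h := ENNReal.summable_toReal hne
    refine h.congr fun i => ?_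
    rw [ENNReal.toReal_ofReal (hSnn (b i))]
  have hσtsum : ∑' i, ⟪S (b i), b i⟫ = ∫ ω, ‖Z ω‖ ^ 2 ∂μ := by
    have hpt : ∀ ω, ‖Z ω‖ ^ 2 = ∑' i, X i ω ^ 2 := fun ω => (hP ω).tsum_eq.symm
    rw [show (∫ ω, ‖Z ω‖ ^ 2 ∂μ) = ∫ ω, ∑' i, X i ω ^ 2 ∂μ from
      integral_congr_ae (Filter.Eventually.of_forall hpt)]
    rw [integral_tsum (fun i =>
      show AEStronglyMeasurable (fun ω => X i ω ^ 2) μ from (hXmeas i).pow 2) ?hfin]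
    · exact tsum_congr fun i => (hvar i).symm
    case hfin =>
      have h1 : ∀ i, ∫⁻ ω, ‖X i ω ^ 2‖ₑ ∂μ = ∫⁻ ω, ENNReal.ofReal (X i ω ^ 2) ∂μ := fun i =>
        lintegral_congr fun ω => Real.enorm_eq_ofReal (sq_nonneg _)
      rw [tsum_congr h1, hsumlint]
      exact hfin2
  -- Parseval for S (b i)
  have hSb : ∀ i, HasSum (fun j => ⟪S (b i), b j⟫ ^ 2) (‖S (b i)‖ ^ 2) := by
    intro i
    have h := b.hasSum_inner_mul_inner (S (b i)) (S (b i))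
    rw [real_inner_self_eq_norm_sq] at h
    convert h using 1
    · rfl
    funext j
    rw [real_inner_comm (b j) (S (b i))]; ring
  -- final assembly
  set T : ℝ := ∫ ω, ‖Z ω‖ ^ 2 ∂μ with hT
  calc ∫ ω, ‖Z ω‖ ^ 4 ∂μ
      = ∑' i, ∫ ω, X i ω ^ 2 * ‖Z ω‖ ^ 2 ∂μ := hstep1
    _ = ∑' i, ∑' j, (⟪S (b i), b i⟫ * ⟪S (b j), b j⟫ + 2 * ⟪S (b i), b j⟫ ^ 2) := by
        refine tsum_congr fun i => ?_
        rw [hstep2 i]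
        exact tsum_congr fun j => hXX i j
    _ = ∑' i, (⟪S (b i), b i⟫ * T + 2 * ‖S (b i)‖ ^ 2) := by
        refine tsum_congr fun i => ?_
        rw [Summable.tsum_add (hσsum.mul_left _) (((hSb i).summable).mul_left 2)]
        rw [tsum_mul_left, tsum_mul_left, hσtsum, (hSb i).tsum_eq]
    _ = T ^ 2 + 2 * ∑' i, ‖S (b i)‖ ^ 2 := by
        rw [Summable.tsum_add (hσsum.mul_right _) (hHS.mul_left 2)]
        rw [tsum_mul_right, tsum_mul_left, hσtsum, sq]
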